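/- Let v belong to the class 𝓥 and define h_v(s) = liminf_{x→+∞}(v(x)/x − v(sx)/(sx)) for s > 0. Then for every s > 0, h_v(s) = liminf_{k→∞, k∈ℕ}(v(k)/k − v(⌊sk⌋+1)/(sk)). -/

import Mathlib

open Filter

/-- The class 𝓥 of nonnegative convex increasing functions on [0,∞) with v(0)=0
satisfying conditions (V1), (V2), (V3). -/
def ClassV (v : ℝ → ℝ) : Prop :=
  (∀ x ∈ Set.Ici (0 : ℝ), 0 ≤ v x) ∧ ConvexOn ℝ (Set.Ici 0) v ∧
  MonotoneOn v (Set.Ici 0) ∧ v 0 = 0 ∧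
  (∃ A B : ℝ, ∀ x : ℝ, 1 ≤ x → x * Real.log x + A * x + B ≤ v x) ∧
  (∀ s : ℝ, 1 < s → ∃ η : ℝ, 0 < η ∧ ∃ m : ℝ,
    ∀ x : ℝ, 0 ≤ x → s * v x + η * x + m ≤ v (s * x)) ∧
  (∀ ε : ℝ, 0 < ε → ∃ a : ℝ, 0 < a ∧ ∃ b : ℝ,
    ∀ y : ℝ, 1 ≤ y → ∀ x : ℝ, 1 ≤ x → v (x + y) - v x - ε * x ≤ v y + a * y + b)

/-- If two sets of reals are mutual ε-shifts of each other, their sups agree. -/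
lemma sSup_shift_eq (S T : Set ℝ)
    (hST : ∀ ε : ℝ, 0 < ε → ∀ a ∈ S, a - ε ∈ T)
    (hTS : ∀ ε : ℝ, 0 < ε → ∀ a ∈ T, a - ε ∈ S) :
    sSup S = sSup T := by
  rcases S.eq_empty_or_nonempty with hS | hS
  · rcases T.eq_empty_or_nonempty with hT | hT
    · rw [hS, hT]
    · obtain ⟨a, ha⟩ := hT
      have := hTS 1 one_pos a ha
      rw [hS] at this
      exact absurd this (Set.notMem_empty _)
  · rcases T.eq_empty_or_nonempty with hT | hT
    · obtain ⟨a, ha⟩ := hS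
      have := hST 1 one_pos a ha
      rw [hT] at this
      exact absurd this (Set.notMem_empty _)
    · by_cases hSb : BddAbove S
      · have hTb : BddAbove T := by
          obtain ⟨c, hc⟩ := hSb
          refine ⟨c + 1, fun a ha => ?_⟩
          have := hc (hTS 1 one_pos a ha)
          linarith
        apply le_antisymm
        · refine le_of_forall_pos_le_add fun ε hε => ?_
          refine csSup_le hS fun a ha => ?_
          have := le_csSup hTb (hST ε hε a ha)
          linarith
        · refine le_of_forall_pos_le_add fun ε hε => ?_
          refine csSup_le hT fun a ha => ?_
          have := le_csSup hSb (hTS ε hε a ha)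
          linarith
      · have hTb : ¬ BddAbove T := by
          intro ⟨c, hc⟩
          apply hSb
          refine ⟨c + 1, fun a ha => ?_⟩
          have := hc (hST 1 one_pos a ha)
          linarith
        rw [Real.sSup_of_not_bddAbove hSb, Real.sSup_of_not_bddAbove hTb]

theorem stmt_18 (v : ℝ → ℝ) (hv : ClassV v) (s : ℝ) (hs : 0 < s) :
    Filter.liminf (fun x : ℝ => v x / x - v (s * x) / (s * x)) Filter.atTop =
    Filter.liminf
      (fun k : ℕ => v k / k - v ((⌊s * (k : ℝ)⌋₊ : ℝ) + 1) / (s * k)) Filter.atTop := by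
  obtain ⟨hnn, hconv, hmono, hzero, _, _, hV3⟩ := hv
  -- v x / x is nondecreasing on (0, ∞)
  have ratio : ∀ a b : ℝ, 0 < a → a ≤ b → v a / a ≤ v b / b := by
    intro a b ha hab
    have hb : 0 < b := lt_of_lt_of_le ha hab
    have hw2 : (0:ℝ) ≤ a / b := by positivity
    have hw1 : (0:ℝ) ≤ 1 - a / b := by
      have : a / b ≤ 1 := (div_le_one hb).mpr hab
      linarith
    have h := hconv.2 (Set.mem_Ici.mpr (le_refl (0:ℝ))) (Set.mem_Ici.mpr hb.le)
      hw1 hw2 (by ring)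
    simp only [smul_eq_mul, mul_zero, hzero, zero_add] at h
    rw [div_mul_cancel₀ _ hb.ne'] at h
    -- h : v a ≤ (1 - a/b) * 0 + a / b * v b  (after simp)
    rw [div_le_div_iff₀ ha hb]
    have h2 : v a * b ≤ (a / b * v b) * b := by nlinarith
    calc v a * b ≤ (a / b * v b) * b := h2
      _ = v b * a := by field_simp
  set y0 : ℝ := max s 1 with hy0def
  have hy0' : (1:ℝ) ≤ y0 := le_max_right _ _
  have hy0s : s ≤ y0 := le_max_left _ _
  -- Claim 1 : on naturals, the floor expression is ε-close above f(k)
  have claim1 : ∀ ε : ℝ, 0 < ε → ∀ᶠ k : ℕ in atTop,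
      (v k / k - v (s * k) / (s * k)) - ε
        ≤ v k / k - v ((⌊s * (k : ℝ)⌋₊ : ℝ) + 1) / (s * k) := by
    intro ε hε
    obtain ⟨a, ha, b, hab⟩ := hV3 (ε/2) (by positivity)
    set C : ℝ := v y0 + a * y0 + b with hCdef
    have hV3' : ∀ x : ℝ, 1 ≤ x → v (x + y0) ≤ v x + ε/2 * x + C := by
      intro x hx
      have := hab y0 hy0' x hx
      simp only [hCdef]
      linarith
    have hten : Tendsto (fun k : ℕ => s * (k:ℝ)) atTop atTop :=
      (tendsto_natCast_atTop_atTop (R := ℝ)).const_mul_atTop hs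
    filter_upwards [hten.eventually_ge_atTop (max 1 (2 * C / ε))] with k hk
    have h1 : (1:ℝ) ≤ s * k := le_trans (le_max_left _ _) hk
    have hsk : (0:ℝ) < s * k := lt_of_lt_of_le one_pos h1
    have hC2 : C ≤ ε/2 * (s * k) := by
      have h2 : 2 * C / ε ≤ s * k := le_trans (le_max_right _ _) hk
      rw [div_le_iff₀ hε] at h2
      nlinarith
    have hfl : ((⌊s * (k:ℝ)⌋₊ : ℝ) + 1) ≤ s * k + y0 := by
      have h2 : (⌊s * (k:ℝ)⌋₊ : ℝ) ≤ s * k := Nat.floor_le hsk.le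
      linarith
    have hmn : v ((⌊s * (k:ℝ)⌋₊ : ℝ) + 1) ≤ v (s * k + y0) :=
      hmono (Set.mem_Ici.mpr (by positivity)) (Set.mem_Ici.mpr (by positivity)) hfl
    have hup := hV3' (s * k) h1
    have hfinal : v ((⌊s * (k:ℝ)⌋₊ : ℝ) + 1) ≤ v (s * k) + ε * (s * k) := by linarith
    have hdiv : v ((⌊s * (k:ℝ)⌋₊ : ℝ) + 1) / (s * k) ≤ v (s * k) / (s * k) + ε := by
      rw [div_le_iff₀ hsk] at *
      have : (v (s * k) / (s * k) + ε) * (s * k) = v (s * k) + ε * (s * k) := by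
        rw [add_mul, div_mul_cancel₀ _ hsk.ne']
      linarith [hfinal]
    linarith
  -- Claim 2 : on reals, f(x) is ε-close above g(⌊x⌋)
  have claim2 : ∀ ε : ℝ, 0 < ε → ∀ᶠ x : ℝ in atTop,
      (v (⌊x⌋₊:ℝ) / (⌊x⌋₊:ℝ) - v ((⌊s * (⌊x⌋₊:ℝ)⌋₊ : ℝ) + 1) / (s * (⌊x⌋₊:ℝ))) - ε
        ≤ v x / x - v (s * x) / (s * x) := by
    intro ε hε
    obtain ⟨a, ha, b, hab⟩ := hV3 (ε/2) (by positivity)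
    set C : ℝ := v y0 + a * y0 + b with hCdef
    have hV3' : ∀ x : ℝ, 1 ≤ x → v (x + y0) ≤ v x + ε/2 * x + C := by
      intro x hx
      have := hab y0 hy0' x hx
      simp only [hCdef]
      linarith
    filter_upwards [eventually_ge_atTop (max 1 (2 * C / ε) / s + 2)] with x hx
    have hTpos : (0:ℝ) < max 1 (2 * C / ε) / s := by positivity
    have hx1 : (1:ℝ) ≤ x := by linarith
    have hx0 : (0:ℝ) ≤ x := by linarith
    have hkx : (⌊x⌋₊:ℝ) ≤ x := Nat.floor_le hx0
    have hxk1 : x < (⌊x⌋₊:ℝ) + 1 := Nat.lt_floor_add_one x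
    have hk1 : (1:ℝ) ≤ (⌊x⌋₊:ℝ) := by
      have : x - 1 < (⌊x⌋₊:ℝ) := Nat.sub_one_lt_floor x
      have hx2 : (2:ℝ) ≤ x := by linarith
      exact_mod_cast Nat.one_le_floor_iff x |>.mpr hx1
    have hkpos : (0:ℝ) < (⌊x⌋₊:ℝ) := lt_of_lt_of_le one_pos hk1
    have hxpos : (0:ℝ) < x := lt_of_lt_of_le one_pos hx1
    have hfloor_big : max 1 (2 * C / ε) ≤ s * (⌊x⌋₊:ℝ) := by
      have h1 : x - 1 < (⌊x⌋₊:ℝ) := Nat.sub_one_lt_floor x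
      have h2 : max 1 (2 * C / ε) / s ≤ (⌊x⌋₊:ℝ) := by linarith
      rw [div_le_iff₀ hs] at h2
      linarith [h2]
    have hsk1 : (1:ℝ) ≤ s * (⌊x⌋₊:ℝ) := le_trans (le_max_left _ _) hfloor_big
    have hskpos : (0:ℝ) < s * (⌊x⌋₊:ℝ) := lt_of_lt_of_le one_pos hsk1
    have hC2 : C ≤ ε/2 * (s * (⌊x⌋₊:ℝ)) := by
      have h2 : 2 * C / ε ≤ s * (⌊x⌋₊:ℝ) := le_trans (le_max_right _ _) hfloor_big
      rw [div_le_iff₀ hε] at h2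
      nlinarith
    -- part 1
    have hpart1 : v (⌊x⌋₊:ℝ) / (⌊x⌋₊:ℝ) ≤ v x / x := ratio _ _ hkpos hkx
    -- part 2
    have hsxk : s * (⌊x⌋₊:ℝ) ≤ s * x := by nlinarith
    have hsx_le : s * x ≤ s * (⌊x⌋₊:ℝ) + y0 := by nlinarith
    have hv_sx : v (s * x) ≤ v (s * (⌊x⌋₊:ℝ)) + ε/2 * (s * (⌊x⌋₊:ℝ)) + C := by
      have h1 := hV3' (s * (⌊x⌋₊:ℝ)) hsk1
      have h2 : v (s * x) ≤ v (s * (⌊x⌋₊:ℝ) + y0) :=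
        hmono (Set.mem_Ici.mpr (by positivity)) (Set.mem_Ici.mpr (by positivity)) hsx_le
      linarith
    have hv_fl : v (s * (⌊x⌋₊:ℝ)) ≤ v ((⌊s * (⌊x⌋₊:ℝ)⌋₊:ℝ) + 1) := by
      refine hmono (Set.mem_Ici.mpr (by positivity)) (Set.mem_Ici.mpr (by positivity)) ?_
      exact (Nat.lt_floor_add_one (s * (⌊x⌋₊:ℝ))).le
    have hnum : v (s * x) ≤ v ((⌊s * (⌊x⌋₊:ℝ)⌋₊:ℝ) + 1) + ε * (s * (⌊x⌋₊:ℝ)) := by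
      linarith
    have hvsx0 : 0 ≤ v (s * x) := hnn _ (Set.mem_Ici.mpr (by positivity))
    have hpart2 : v (s * x) / (s * x) ≤ v ((⌊s * (⌊x⌋₊:ℝ)⌋₊:ℝ) + 1) / (s * (⌊x⌋₊:ℝ)) + ε := by
      have step1 : v (s * x) / (s * x) ≤ v (s * x) / (s * (⌊x⌋₊:ℝ)) := by
        gcongr
      have step2 : v (s * x) / (s * (⌊x⌋₊:ℝ))
          ≤ (v ((⌊s * (⌊x⌋₊:ℝ)⌋₊:ℝ) + 1) + ε * (s * (⌊x⌋₊:ℝ))) / (s * (⌊x⌋₊:ℝ)) := by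
        gcongr
      have heq : (v ((⌊s * (⌊x⌋₊:ℝ)⌋₊:ℝ) + 1) + ε * (s * (⌊x⌋₊:ℝ))) / (s * (⌊x⌋₊:ℝ))
          = v ((⌊s * (⌊x⌋₊:ℝ)⌋₊:ℝ) + 1) / (s * (⌊x⌋₊:ℝ)) + ε := by
        field_simp
      linarith
    linarith
  -- assemble
  rw [Filter.liminf_eq, Filter.liminf_eq]
  apply sSup_shift_eq
  · intro ε hε c hc
    simp only [Set.mem_setOf_eq] at hc ⊢
    have h1 : ∀ᶠ k : ℕ in atTop, c ≤ v (k:ℝ) / (k:ℝ) - v (s * (k:ℝ)) / (s * (k:ℝ)) :=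
      (tendsto_natCast_atTop_atTop (R := ℝ)).eventually hc
    filter_upwards [h1, claim1 ε hε] with k hk1 hk2
    linarith
  · intro ε hε c hc
    simp only [Set.mem_setOf_eq] at hc ⊢
    have h1 : ∀ᶠ x : ℝ in atTop,
        c ≤ v (⌊x⌋₊:ℝ) / (⌊x⌋₊:ℝ) - v ((⌊s * (⌊x⌋₊:ℝ)⌋₊:ℝ) + 1) / (s * (⌊x⌋₊:ℝ)) :=
      tendsto_nat_floor_atTop.eventually hc
    filter_upwards [h1, claim2 ε hε] with x hx1 hx2
    linarith
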